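/- For every g ∈ Homeo_+[0,1] and every integer d ≥ 1, one has g ∘ T_d = T_d ∘ ⊕^d(g), i.e. g(T_d(x)) = T_d(⊕^d(g)(x)) for all x ∈ [0,1]. -/

import Mathlib

open unitInterval

noncomputable section

/-- The group of orientation-preserving homeomorphisms of `[0,1]`:
increasing homeomorphisms of the unit interval. -/
def OPH : Type := {f : I ≃ₜ I // Monotone f}

/-- `Homeo₊[0,1]` with the supremum metric `d_sup(f,g) = sup_x |f x - g x|`,
obtained by inducing the metric from `C(I,I)` (whose distance is the sup-distance). -/
noncomputable instance : MetricSpace OPH :=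
  MetricSpace.induced (fun f => (⟨(f.1 : I → I), f.1.continuous⟩ : C(I, I)))
    (fun f g h => Subtype.ext (Homeomorph.ext fun x => by
      simpa using ContinuousMap.congr_fun h x))
    inferInstance

/-- The identity of `Homeo₊[0,1]`. -/
def OPH.id : OPH := ⟨Homeomorph.refl I, fun _ _ h => h⟩

/-- `f ↦ f̃` where `f̃ (x) = 1 - f (1 - x)`. -/
def OPH.tilde (f : OPH) : OPH :=
  ⟨symmHomeomorph.trans (f.1.trans symmHomeomorph), by
    intro x y hxy
    have h1 : σ y ≤ σ x := symm_le_symm.mpr hxy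
    have h2 : f.1 (σ y) ≤ f.1 (σ x) := f.2 h1
    exact symm_le_symm.mpr h2⟩



/-- The standard degree-`d` tent map, as a function on `ℝ`.  For
`x ∈ [m/d, (m+1)/d]` it equals `d*x - m` if `m` is even and `1 + m - d*x` if `m` is odd. -/
noncomputable def tentFun (d : ℕ) (x : ℝ) : ℝ :=
  if Even ⌊(d : ℝ) * x⌋ then (d : ℝ) * x - ⌊(d : ℝ) * x⌋ else 1 + ⌊(d : ℝ) * x⌋ - (d : ℝ) * x

/-- The standard degree-`d` tent map `T_d : [0,1] → [0,1]`. -/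
noncomputable def tentI (d : ℕ) (x : I) : I :=
  ⟨tentFun d x, by
    have h0 : ((⌊(d : ℝ) * x⌋ : ℤ) : ℝ) ≤ (d : ℝ) * x := Int.floor_le _
    have h1 : ((d : ℝ) * x : ℝ) < ⌊(d : ℝ) * x⌋ + 1 := Int.lt_floor_add_one _
    unfold tentFun
    rw [Set.mem_Icc]
    split_ifs <;> constructor <;> linarith⟩

/-- The defining property of the homeomorphism `⊕^d(g)` of `[0,1]`:
`G = ⊕^d(g)` iff for every `i < d` and `x ∈ [i/d, (i+1)/d]`,
`G x = (1/d) * g_i (d*x - i) + i/d`, where `g_i = g` for even `i` and `g_i = g̃`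
(with `g̃ (x) = 1 - g (1-x)`) for odd `i`. -/
def OplusProp (g : OPH) (d : ℕ) (G : I → I) : Prop :=
  ∀ i : ℕ, i < d → ∀ x : I, (i : ℝ) / d ≤ (x : ℝ) → (x : ℝ) ≤ ((i : ℝ) + 1) / d →
    ∀ hx : (d : ℝ) * (x : ℝ) - (i : ℝ) ∈ unitInterval,
      (G x : ℝ) =
        (1 / d) * ((if Even i then g.1 else (OPH.tilde g).1) ⟨(d : ℝ) * (x : ℝ) - (i : ℝ), hx⟩ : ℝ)
          + (i : ℝ) / d

/-- For every `g ∈ Homeo₊[0,1]` and every `d ≥ 1`: `g ∘ T_d = T_d ∘ ⊕^d(g)`,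
where `G = ⊕^d(g)` is (any, equivalently the unique) map satisfying the defining
piecewise formula `OplusProp g d G`. -/
lemma tent_key (d i : ℕ) (u y : ℝ) (hu0 : 0 ≤ u) (hu1 : u ≤ 1)
    (hy : (d : ℝ) * y = i + u) :
    tentFun d y = if Even i then u else 1 - u := by
  unfold tentFun
  rw [hy]
  rcases eq_or_lt_of_le hu1 with h1 | h1
  · subst h1
    have hf : ⌊(i : ℝ) + 1⌋ = (i : ℤ) + 1 := by
      rw [show ((i : ℝ) + 1) = (((i : ℤ) + 1 : ℤ) : ℝ) by push_cast; ring, Int.floor_intCast]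
    rw [hf]
    have he : Even ((i : ℤ) + 1) ↔ ¬ Even i := by
      rw [Int.even_add_one, Int.even_coe_nat]
    by_cases h : Even i <;> simp [h, he] <;> push_cast <;> ring
  · have hf : ⌊(i : ℝ) + u⌋ = (i : ℤ) := by
      rw [add_comm, Int.floor_add_natCast, Int.floor_eq_zero_iff.2 ⟨hu0, h1⟩]
      ring
    rw [hf]
    by_cases h : Even i <;> simp [h, Int.even_coe_nat] <;> push_cast <;> ring

theorem comp_tent_eq_tent_comp_oplus (g : OPH) (d : ℕ) (hd : 1 ≤ d) (G : I → I)
    (hG : OplusProp g d G) :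
    ∀ x : I, g.1 (tentI d x) = tentI d (G x) := by
  intro x
  have hd0 : (0 : ℝ) < d := by exact_mod_cast hd
  have hx0 : (0 : ℝ) ≤ (x : ℝ) := x.2.1
  have hx1 : (x : ℝ) ≤ 1 := x.2.2
  have hdx0 : (0 : ℝ) ≤ (d : ℝ) * x := by positivity
  have hdxd : (d : ℝ) * x ≤ d := by nlinarith
  set m : ℕ := min (d - 1) (⌊(d : ℝ) * x⌋).toNat with hm
  have hmd : m < d := lt_of_le_of_lt (min_le_left _ _) (by omega)
  -- m ≤ d*x
  have hfl0 : (0 : ℤ) ≤ ⌊(d : ℝ) * x⌋ := Int.floor_nonneg.2 hdx0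
  have h1 : (m : ℝ) ≤ (d : ℝ) * x := by
    have : (m : ℤ) ≤ ⌊(d : ℝ) * x⌋ := by
      have := min_le_right (d - 1) (⌊(d : ℝ) * x⌋).toNat
      omega
    calc (m : ℝ) = ((m : ℤ) : ℝ) := by push_cast; ring
    _ ≤ (⌊(d : ℝ) * x⌋ : ℝ) := by exact_mod_cast this
    _ ≤ (d : ℝ) * x := Int.floor_le _
  have h2 : (d : ℝ) * x ≤ (m : ℝ) + 1 := by
    by_cases hc : (⌊(d : ℝ) * x⌋).toNat ≤ d - 1
    · have hmv : (m : ℤ) = ⌊(d : ℝ) * x⌋ := by omega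
      have := Int.lt_floor_add_one ((d : ℝ) * x)
      rw [← hmv] at this
      push_cast at this
      linarith
    · have hmv : m = d - 1 := by omega
      have : (m : ℝ) + 1 = d := by
        rw [hmv]
        have : ((d - 1 : ℕ) : ℝ) = (d : ℝ) - 1 := by
          have : (1 : ℕ) ≤ d := hd
          push_cast [Nat.cast_sub this]
          ring
        rw [this]; ring
      linarith [hdxd]
  set t : ℝ := (d : ℝ) * x - m with hT
  have ht0 : 0 ≤ t := by simp [hT]; linarith
  have ht1 : t ≤ 1 := by simp [hT]; linarith
  have htI : (d : ℝ) * (x : ℝ) - (m : ℝ) ∈ unitInterval := ⟨ht0, ht1⟩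
  -- bounds for OplusProp
  have hb1 : (m : ℝ) / d ≤ (x : ℝ) := by rw [div_le_iff₀ hd0]; linarith [mul_comm (x:ℝ) (d:ℝ)] 
  have hb2 : (x : ℝ) ≤ ((m : ℝ) + 1) / d := by rw [le_div_iff₀ hd0]; linarith [mul_comm (x:ℝ) (d:ℝ)]
  have hGx := hG m hmd x hb1 hb2 htI
  set v : ℝ := ((if Even m then g.1 else (OPH.tilde g).1) ⟨(d : ℝ) * (x : ℝ) - (m : ℝ), htI⟩ : ℝ)
    with hv
  have hv0 : 0 ≤ v := ((if Even m then g.1 else (OPH.tilde g).1)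
    ⟨(d : ℝ) * (x : ℝ) - (m : ℝ), htI⟩).2.1
  have hv1 : v ≤ 1 := ((if Even m then g.1 else (OPH.tilde g).1)
    ⟨(d : ℝ) * (x : ℝ) - (m : ℝ), htI⟩).2.2
  have hdGx : (d : ℝ) * (G x : ℝ) = (m : ℝ) + v := by
    rw [hGx]; field_simp; ring
  have hRHS : tentFun d (G x) = if Even m then v else 1 - v :=
    tent_key d m v (G x) hv0 hv1 hdGx
  -- tentFun d x
  have hdx : (d : ℝ) * (x : ℝ) = (m : ℝ) + t := by rw [hT]; ring
  have hLHSf : tentFun d x = if Even m then t else 1 - t :=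
    tent_key d m t x ht0 ht1 hdx
  apply Subtype.ext
  show (g.1 (tentI d x) : ℝ) = tentFun d (G x)
  rw [hRHS]
  by_cases h : Even m
  · simp only [h, if_true]
    have : tentI d x = ⟨(d : ℝ) * (x : ℝ) - (m : ℝ), htI⟩ := by
      apply Subtype.ext
      show tentFun d x = _
      rw [hLHSf, if_pos h]
    rw [this, hv, if_pos h]
  · simp only [h, if_false]
    have hσ : tentI d x = σ ⟨(d : ℝ) * (x : ℝ) - (m : ℝ), htI⟩ := by
      apply Subtype.ext
      show tentFun d x = _
      rw [hLHSf, if_neg h, coe_symm_eq]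
    rw [hσ, hv, if_neg h]
    show (g.1 (σ _) : ℝ) = 1 - ((OPH.tilde g).1 _ : ℝ)
    have : ((OPH.tilde g).1 ⟨(d : ℝ) * (x : ℝ) - (m : ℝ), htI⟩ : ℝ)
        = (σ (g.1 (σ ⟨(d : ℝ) * (x : ℝ) - (m : ℝ), htI⟩)) : ℝ) := rfl
    rw [this, coe_symm_eq]
    ring


end
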